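/- (Dichotomy between randomness and structure.) For every positive integer n and all m, ε, δ > 0 there exists C = C(n, m, ε, δ) > 0 with the following property. Let V = (J, (V_j)_{j∈J}, d, H_d) be a hypergraph system with |J| ≤ n, for each e ∈ H_d let B_e ⊆ A_e be a σ-algebra with complex(B_e) ≤ m, and for each f ∈ ∂H_d let B_f ⊆ A_f be a σ-algebra with complex(B_f) ≤ M for some M > 0. Then one of the following holds. (Randomness) There exist σ-algebras B_f ⊆ B'_f ⊆ A_f for all f ∈ ∂H_d such that for every e ∈ H_d and every E_e ∈ B_e one has ℰ_{E_e}(∨_{f∈∂e} B'_f) < ℰ_{E_e}(∨_{f∈∂e} B_f) + ε² and Δ_e(E_e | ∨_{f∈∂e} B'_f) ≤ δ. (Structure) There exist σ-algebras B_f ⊆ B'_f ⊆ A_f for all f ∈ ∂H_d with complex(B'_f) ≤ M + C for all f ∈ ∂H_d, and some e ∈ H_d and E_e ∈ B_e with ℰ_{E_e}(∨_{f∈∂e} B'_f) ≥ ℰ_{E_e}(∨_{f∈∂e} B_f) + ε². -/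

import Mathlib

open scoped Classical BigOperators MeasureTheory

noncomputable section

/-- Average of a real-valued function over a finite type. -/
def avg {α : Type*} [Fintype α] (f : α → ℝ) : ℝ :=
  (∑ x, f x) / (Fintype.card α)

/-- Real-valued indicator function of a set. -/
def ind {α : Type*} (E : Set α) (x : α) : ℝ := if x ∈ E then 1 else 0

/-- Average of `f` over the set `A`. -/
def avgOn {α : Type*} [Fintype α] (A : Set α) (f : α → ℝ) : ℝ :=
  (∑ x ∈ Finset.univ.filter (· ∈ A), f x) / ((Finset.univ.filter (· ∈ A)).card)

/-- The smallest set of the σ-algebra `m` containing `x`. -/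
def atomAt {α : Type*} (m : MeasurableSpace α) (x : α) : Set α :=
  ⋂₀ {s | MeasurableSet[m] s ∧ x ∈ s}

/-- Conditional expectation: the average of `f` over the smallest `m`-set containing `x`. -/
def cexp {α : Type*} [Fintype α] (m : MeasurableSpace α) (f : α → ℝ) (x : α) : ℝ :=
  avgOn (atomAt m x) f

/-- The `E`-energy of a σ-algebra. -/
def energy {α : Type*} [Fintype α] (E : Set α) (m : MeasurableSpace α) : ℝ :=
  avg (fun x => (cexp m (ind E) x) ^ 2)

/-- Complexity: the least number of sets needed to generate `m` as a σ-algebra. -/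
def complexity {α : Type*} (m : MeasurableSpace α) : ℕ :=
  sInf {n | ∃ S : Finset (Set α), S.card = n ∧ MeasurableSpace.generateFrom (↑S : Set (Set α)) = m}

/-- The σ-algebra `A_e` of sets depending only on the coordinates indexed by `e`. -/
def cylAlg {J : Type*} (V : J → Type*) (e : Finset J) : MeasurableSpace (∀ j, V j) :=
  MeasurableSpace.comap (fun x (j : e) => x j.1) ⊤

/-- The skeleton `∂e = {f ⊊ e : |f| = |e| - 1}`. -/
def skel {J : Type*} (e : Finset J) : Finset (Finset J) :=
  e.image (fun j => e.erase j)

/-- The boundary `∂H` of a hypergraph. -/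
def hbd {J : Type*} (H : Finset (Finset J)) : Finset (Finset J) :=
  H.biUnion skel

/-- The `e`-discrepancy of `E` relative to the σ-algebra `m`. -/
def disc {J : Type*} [Fintype J] (V : J → Type*) [∀ j, Fintype (V j)]
    (e : Finset J) (E : Set (∀ j, V j)) (m : MeasurableSpace (∀ j, V j)) : ℝ :=
  sSup { r | ∃ Ef : Finset J → Set (∀ j, V j),
    (∀ f ∈ skel e, MeasurableSet[cylAlg V f] (Ef f)) ∧
    r = |avg (fun x => (ind E x - cexp m (ind E) x) * ∏ f ∈ skel e, ind (Ef f) x)| }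

/-- A growth function: increasing on positives and at least `1 + x`. -/
def IsGrowth (F : ℝ → ℝ) : Prop :=
  (∀ x y, 0 < x → x < y → F x < F y) ∧ ∀ x, 0 < x → 1 + x ≤ F x

/-- An atom of a σ-algebra on a finite set: a minimal non-empty measurable set. -/
def IsAtomOf {α : Type*} (m : MeasurableSpace α) (A : Set α) : Prop :=
  MeasurableSet[m] A ∧ A.Nonempty ∧ ∀ s, MeasurableSet[m] s → s ⊆ A → s = ∅ ∨ s = A

end

set_option linter.unusedSectionVars false

noncomputable section Helpers
variable {α : Type*} [Fintype α]

lemma mem_atomAt (m : MeasurableSpace α) (x : α) : x ∈ atomAt m x := by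
  intro s hs; exact hs.2

lemma atomAt_subset {m : MeasurableSpace α} {s : Set α} (hs : MeasurableSet[m] s) {x : α}
    (hx : x ∈ s) : atomAt m x ⊆ s := Set.sInter_subset_of_mem ⟨hs, hx⟩

lemma measurableSet_atomAt (m : MeasurableSpace α) (x : α) : MeasurableSet[m] (atomAt m x) :=
  MeasurableSet.sInter (Set.to_countable _) (fun _ ht => ht.1)

lemma mem_iff_of_mem_atomAt {m : MeasurableSpace α} {s : Set α} (hs : MeasurableSet[m] s)
    {x y : α} (h : y ∈ atomAt m x) : y ∈ s ↔ x ∈ s := by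
  constructor
  · intro hy
    by_contra hx
    exact absurd (atomAt_subset hs.compl hx h) (fun hc => hc hy)
  · intro hx; exact atomAt_subset hs hx h

lemma atomAt_eq {m : MeasurableSpace α} {x y : α} (h : y ∈ atomAt m x) :
    atomAt m y = atomAt m x := by
  apply subset_antisymm
  · exact atomAt_subset (measurableSet_atomAt m x) h
  · have hx : x ∈ atomAt m y := by
      by_contra hx
      exact atomAt_subset (measurableSet_atomAt m y).compl hx h (mem_atomAt m y)
    exact atomAt_subset (measurableSet_atomAt m y) hx

/-- `g` is constant on the atoms of `m`. -/
def AtomConst (m : MeasurableSpace α) (g : α → ℝ) : Prop :=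
  ∀ x y, y ∈ atomAt m x → g y = g x

lemma atomConst_ind {m : MeasurableSpace α} {E : Set α} (hE : MeasurableSet[m] E) :
    AtomConst m (ind E) := by
  intro x y hy
  unfold ind
  rw [iff_iff_eq.mp (mem_iff_of_mem_atomAt hE hy)]

lemma atomAt_mono {m m' : MeasurableSpace α} (h : m ≤ m') (x : α) :
    atomAt m' x ⊆ atomAt m x := by
  intro y hy s hs
  exact hy s ⟨h _ hs.1, hs.2⟩

lemma atomConst_mono {m m' : MeasurableSpace α} (h : m ≤ m') {g : α → ℝ}
    (hg : AtomConst m g) : AtomConst m' g :=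
  fun x y hy => hg x y (atomAt_mono h x hy)

lemma atomConst_cexp (m : MeasurableSpace α) (f : α → ℝ) : AtomConst m (cexp m f) := by
  intro x y hy
  unfold cexp
  rw [atomAt_eq hy]

/-- Key summation identity: conditional averaging is self-adjoint against atom-constants. -/
lemma sum_cexp_mul (m : MeasurableSpace α) (f g : α → ℝ) (hg : AtomConst m g) :
    ∑ x, cexp m f x * g x = ∑ x, f x * g x := by
  classical
  have key : ∀ F : α → ℝ, ∑ x, F x =
      ∑ A : Set α, ∑ x ∈ Finset.univ.filter (fun x => atomAt m x = A), F x := by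
    intro F
    exact (Finset.sum_fiberwise_of_maps_to (fun x _ => Finset.mem_univ _) F).symm
  rw [key (fun x => cexp m f x * g x), key (fun x => f x * g x)]
  apply Finset.sum_congr rfl
  intro A _
  set T := Finset.univ.filter (fun x => atomAt m x = A) with hT
  rcases T.eq_empty_or_nonempty with hTe | ⟨x₀, hx₀⟩
  · rw [hTe]; simp
  · have hx₀A : atomAt m x₀ = A := by simpa [hT] using hx₀
    have hmem : ∀ y, y ∈ T ↔ y ∈ A := by
      intro y
      simp only [hT, Finset.mem_filter, Finset.mem_univ, true_and]
      constructor
      · intro h; rw [← h]; exact mem_atomAt m y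
      · intro h; rw [← hx₀A] at h; rw [atomAt_eq h, hx₀A]
    have hTfilter : T = Finset.univ.filter (· ∈ A) := by
      ext y; simp only [Finset.mem_filter, Finset.mem_univ, true_and]
      simpa using hmem y
    have hgconst : ∀ y ∈ T, g y = g x₀ := by
      intro y hy
      apply hg x₀
      rw [hx₀A]; exact (hmem y).mp hy
    have hcconst : ∀ y ∈ T, cexp m f y = avgOn A f := by
      intro y hy
      have : atomAt m y = A := by simpa [hT] using hy
      unfold cexp; rw [this]
    calc ∑ x ∈ T, cexp m f x * g x = ∑ x ∈ T, avgOn A f * g x₀ := by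
          apply Finset.sum_congr rfl; intro y hy; rw [hcconst y hy, hgconst y hy]
      _ = T.card * (avgOn A f * g x₀) := by rw [Finset.sum_const, nsmul_eq_mul]
      _ = (∑ x ∈ T, f x) * g x₀ := by
          unfold avgOn
          rw [← hTfilter]
          have hcard : (T.card : ℝ) ≠ 0 := by
            simp only [ne_eq, Nat.cast_eq_zero, Finset.card_eq_zero]
            exact Finset.nonempty_iff_ne_empty.mp ⟨x₀, hx₀⟩
          field_simp
      _ = ∑ x ∈ T, f x * g x := by
          rw [Finset.sum_mul]
          apply Finset.sum_congr rfl; intro y hy; rw [hgconst y hy]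

lemma sum_cexp (m : MeasurableSpace α) (f : α → ℝ) : ∑ x, cexp m f x = ∑ x, f x := by
  have := sum_cexp_mul m f (fun _ => 1) (fun _ _ _ => rfl)
  simpa using this


lemma sum_mul_ind (F : α → ℝ) (S : Set α) :
    ∑ x, F x * ind S x = ∑ x ∈ Finset.univ.filter (· ∈ S), F x := by
  rw [Finset.sum_filter]
  apply Finset.sum_congr rfl
  intro x _
  by_cases hx : x ∈ S <;> simp [ind, hx]

lemma cexp_tower {m m' : MeasurableSpace α} (h : m ≤ m') (f : α → ℝ) :
    cexp m (cexp m' f) = cexp m f := by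
  funext x
  show avgOn (atomAt m x) (cexp m' f) = avgOn (atomAt m x) f
  unfold avgOn
  congr 1
  have hA : MeasurableSet[m'] (atomAt m x) := h _ (measurableSet_atomAt m x)
  have := sum_cexp_mul m' f (ind (atomAt m x)) (atomConst_ind hA)
  rw [sum_mul_ind, sum_mul_ind] at this
  exact this

lemma avg_nonneg {f : α → ℝ} (h : ∀ x, 0 ≤ f x) : 0 ≤ avg f := by
  unfold avg
  apply div_nonneg (Finset.sum_nonneg (fun x _ => h x)) (by positivity)

lemma avg_le_one {f : α → ℝ} (h : ∀ x, f x ≤ 1) : avg f ≤ 1 := by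
  unfold avg
  rcases Nat.eq_zero_or_pos (Fintype.card α) with h0 | h0
  · simp [h0]
  · rw [div_le_one (by exact_mod_cast h0)]
    calc ∑ x, f x ≤ ∑ _x : α, (1:ℝ) := Finset.sum_le_sum (fun x _ => h x)
      _ = (Fintype.card α : ℝ) := by simp

lemma cexp_ind_nonneg (m : MeasurableSpace α) (E : Set α) (x : α) : 0 ≤ cexp m (ind E) x := by
  unfold cexp avgOn
  apply div_nonneg ?_ (by positivity)
  apply Finset.sum_nonneg
  intro y _
  unfold ind; positivity

lemma cexp_ind_le_one (m : MeasurableSpace α) (E : Set α) (x : α) : cexp m (ind E) x ≤ 1 := by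
  unfold cexp avgOn
  set T := Finset.univ.filter (· ∈ atomAt m x)
  rcases Nat.eq_zero_or_pos T.card with h0 | h0
  · rw [h0]; simp
  · rw [div_le_one (by exact_mod_cast h0 : (0:ℝ) < (T.card : ℝ))]
    calc ∑ y ∈ T, ind E y ≤ ∑ _y ∈ T, (1:ℝ) := by
          apply Finset.sum_le_sum; intro y _; unfold ind; split <;> norm_num
      _ = (T.card : ℝ) := by simp

lemma energy_nonneg (E : Set α) (m : MeasurableSpace α) : 0 ≤ energy E m :=
  avg_nonneg (fun x => sq_nonneg _)

lemma energy_le_one (E : Set α) (m : MeasurableSpace α) : energy E m ≤ 1 :=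
  avg_le_one (fun x => by
    have h1 := cexp_ind_le_one m E x
    have h0 := cexp_ind_nonneg m E x
    nlinarith)

lemma pythagoras {m m' : MeasurableSpace α} (h : m ≤ m') (f : α → ℝ) :
    avg (fun x => cexp m' f x ^ 2) =
      avg (fun x => cexp m f x ^ 2) + avg (fun x => (cexp m' f x - cexp m f x) ^ 2) := by
  set u := cexp m f with hu
  set v := cexp m' f with hv
  have hu' : AtomConst m' u := atomConst_mono h (atomConst_cexp m f)
  have h1 : ∑ x, v x * u x = ∑ x, f x * u x := sum_cexp_mul m' f u hu'
  have h2 : ∑ x, u x * u x = ∑ x, f x * u x := sum_cexp_mul m f u (atomConst_cexp m f)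
  unfold avg
  rw [← add_div]
  congr 1
  have : ∀ x : α, v x ^ 2 = (u x ^ 2 + (v x - u x) ^ 2) + (2 * (v x * u x) - 2 * (u x * u x)) := by
    intro x; ring
  rw [Finset.sum_congr rfl (fun x _ => this x), Finset.sum_add_distrib,
    Finset.sum_sub_distrib, ← Finset.mul_sum, ← Finset.mul_sum, h1, h2]
  rw [← Finset.sum_add_distrib]
  simp

lemma energy_mono {m m' : MeasurableSpace α} (h : m ≤ m') (E : Set α) :
    energy E m ≤ energy E m' := by
  unfold energy
  rw [pythagoras h (ind E)]
  have := avg_nonneg (f := fun x => (cexp m' (ind E) x - cexp m (ind E) x) ^ 2)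
    (fun x => sq_nonneg _)
  linarith

lemma energy_increment [Nonempty α] {m m' : MeasurableSpace α} (h : m ≤ m') {E : Set α}
    {g : α → ℝ} (hg : AtomConst m' g) (hgb : ∀ x, |g x| ≤ 1) {t : ℝ} (ht0 : 0 ≤ t)
    (ht : t ≤ |avg (fun x => (ind E x - cexp m (ind E) x) * g x)|) :
    energy E m + t ^ 2 ≤ energy E m' := by
  set u := cexp m (ind E) with hu
  set v := cexp m' (ind E) with hv
  have hN : (0:ℝ) < (Fintype.card α : ℝ) := by exact_mod_cast Fintype.card_pos
  -- step 1 : avg ((ind E - u) g) = avg ((v - u) g)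
  have h1 : ∑ x, v x * g x = ∑ x, ind E x * g x := sum_cexp_mul m' (ind E) g hg
  have hstep : avg (fun x => (ind E x - u x) * g x) = avg (fun x => (v x - u x) * g x) := by
    unfold avg
    congr 1
    have : ∀ x : α, (ind E x - u x) * g x = ind E x * g x - u x * g x := fun x => by ring
    rw [Finset.sum_congr rfl (fun x _ => this x), Finset.sum_sub_distrib, ← h1]
    have : ∀ x : α, (v x - u x) * g x = v x * g x - u x * g x := fun x => by ring
    rw [Finset.sum_congr rfl (fun x _ => this x), Finset.sum_sub_distrib]
  -- step 2: Cauchy-Schwarz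
  have hCS : (avg (fun x => (v x - u x) * g x)) ^ 2 ≤ avg (fun x => (v x - u x) ^ 2) := by
    unfold avg
    rw [div_pow]
    have hcs := Finset.sum_mul_sq_le_sq_mul_sq Finset.univ (fun x => v x - u x) g
    have hg2 : ∑ x, g x ^ 2 ≤ (Fintype.card α : ℝ) := by
      calc ∑ x, g x ^ 2 ≤ ∑ _x : α, (1:ℝ) := by
            apply Finset.sum_le_sum
            intro x _
            have := hgb x
            nlinarith [abs_nonneg (g x), sq_abs (g x)]
        _ = (Fintype.card α : ℝ) := by simp
    have hsq : (0:ℝ) ≤ ∑ x, (v x - u x)^2 := Finset.sum_nonneg (fun x _ => sq_nonneg _)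
    rw [div_le_div_iff₀ (by positivity) hN]
    have e2 : (∑ x, (v x - u x)^2) * (∑ x, g x^2) ≤ (∑ x, (v x - u x)^2) * (Fintype.card α : ℝ) :=
      mul_le_mul_of_nonneg_left hg2 hsq
    nlinarith [mul_le_mul_of_nonneg_right hcs hN.le, mul_le_mul_of_nonneg_right e2 hN.le]
  have ht2 : t ^ 2 ≤ avg (fun x => (v x - u x) ^ 2) := by
    have habs : t ^ 2 ≤ (avg (fun x => (ind E x - u x) * g x)) ^ 2 := by
      have h2 := pow_le_pow_left₀ ht0 ht 2
      rwa [sq_abs] at h2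
    rw [hstep] at habs
    linarith [hCS]
  unfold energy
  rw [pythagoras h (ind E), ← hu, ← hv]
  linarith

end Helpers

section Counting
open MeasurableSpace
variable {α : Type*} [Fintype α]

lemma generateFrom_all (m : MeasurableSpace α) :
    generateFrom ↑(Finset.univ.filter (fun s : Set α => MeasurableSet[m] s)) = m := by
  apply le_antisymm
  · apply generateFrom_le; intro s hs; simpa using hs
  · intro s hs
    exact measurableSet_generateFrom (by simpa using hs)

lemma exists_gen (m : MeasurableSpace α) :
    ∃ S : Finset (Set α), S.card = complexity m ∧ generateFrom (↑S : Set (Set α)) = m := by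
  have hne : {n | ∃ S : Finset (Set α), S.card = n ∧ generateFrom (↑S : Set (Set α)) = m}.Nonempty :=
    ⟨_, ⟨_, rfl, generateFrom_all m⟩⟩
  exact Nat.sInf_mem hne

lemma complexity_le_card {m : MeasurableSpace α} {S : Finset (Set α)}
    (h : generateFrom (↑S : Set (Set α)) = m) : complexity m ≤ S.card :=
  Nat.sInf_le ⟨S, rfl, h⟩

lemma card_meas_le (m : MeasurableSpace α) (S : Finset (Set α))
    (hgen : generateFrom (↑S : Set (Set α)) = m) :
    (Finset.univ.filter (fun E : Set α => MeasurableSet[m] E)).card ≤ 2 ^ (2 ^ S.card) := by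
  classical
  set sig : α → (↥S → Bool) := fun x s => decide (x ∈ (s : Set α)) with hsig
  have claim : ∀ E : Set α, MeasurableSet[m] E → ∀ x ∈ E, ∀ y, sig y = sig x → y ∈ E := by
    intro E hE
    rw [← hgen] at hE
    induction hE with
    | basic u hu =>
        intro x hx y hxy
        have hu' : u ∈ S := by simpa using hu
        have h2 : sig y ⟨u, hu'⟩ = sig x ⟨u, hu'⟩ := congrFun hxy _
        simp only [hsig, decide_eq_decide] at h2
        exact h2.mpr hx
    | empty => intro x hx; exact absurd hx (Set.notMem_empty x)
    | compl u hu ih =>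
        intro x hx y hxy hyu
        exact hx (ih y hyu x hxy.symm)
    | iUnion g hg ih =>
        intro x hx y hxy
        obtain ⟨i, hi⟩ := Set.mem_iUnion.mp hx
        exact Set.mem_iUnion.mpr ⟨i, ih i x hi y hxy⟩
  have hinj : Set.InjOn (fun E : Set α => (fun σ : ↥S → Bool => decide (∃ z ∈ E, sig z = σ)))
      ↑(Finset.univ.filter (fun E : Set α => MeasurableSet[m] E)) := by
    intro E hE F hF hEF
    simp only [Finset.coe_filter, Set.mem_setOf_eq, Finset.mem_univ, true_and] at hE hF
    have key : ∀ x, x ∈ E ↔ x ∈ F := by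
      intro x
      have h1 := congrFun hEF (sig x)
      simp only [decide_eq_decide] at h1
      constructor
      · intro hx
        obtain ⟨z, hz, hzx⟩ := h1.mp ⟨x, hx, rfl⟩
        exact claim F hF z hz x hzx.symm
      · intro hx
        obtain ⟨z, hz, hzx⟩ := h1.mpr ⟨x, hx, rfl⟩
        exact claim E hE z hz x hzx.symm
    exact Set.ext key
  calc (Finset.univ.filter (fun E : Set α => MeasurableSet[m] E)).card
      ≤ (Finset.univ : Finset ((↥S → Bool) → Bool)).card :=
        Finset.card_le_card_of_injOn _ (fun _ _ => Finset.mem_univ _) hinj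
    _ = 2 ^ (2 ^ S.card) := by
        simp [Finset.card_univ, Fintype.card_fun, Fintype.card_coe]

end Counting


/-- **Dichotomy between randomness and structure.**
Given σ-algebras `B_e ⊆ A_e` (`e ∈ H_d`) of complexity at most `m` and `B_f ⊆ A_f`
(`f ∈ ∂H_d`) of complexity at most `M`, either one can refine the `B_f` so that all sets
in the `B_e` have small energy increment and small discrepancy (randomness), or one can
refine the `B_f` increasing the complexity by at most `C = C(n, m, ε, δ)` so that some set
in some `B_e` gains `ε²` in energy (structure). -/
theorem randomness_structure_dichotomy :
    ∀ n : ℕ, 0 < n → ∀ m ε δ : ℝ, 0 < m → 0 < ε → 0 < δ →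
    ∃ C : ℝ, 0 < C ∧
    ∀ (J : Type) [Fintype J], Fintype.card J ≤ n →
    ∀ (V : J → Type) [∀ j, Fintype (V j)] [∀ j, Nonempty (V j)]
      (d : ℕ), 1 ≤ d →
    ∀ (H : Finset (Finset J)), (∀ e ∈ H, e.card = d) →
    ∀ (Be : Finset J → MeasurableSpace (∀ j, V j)),
      (∀ e ∈ H, Be e ≤ cylAlg V e ∧ (complexity (Be e) : ℝ) ≤ m) →
    ∀ M : ℝ, 0 < M →
    ∀ (B : Finset J → MeasurableSpace (∀ j, V j)),
      (∀ f ∈ hbd H, B f ≤ cylAlg V f ∧ (complexity (B f) : ℝ) ≤ M) →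
      -- (Randomness)
      (∃ B' : Finset J → MeasurableSpace (∀ j, V j),
        (∀ f ∈ hbd H, B f ≤ B' f ∧ B' f ≤ cylAlg V f) ∧
        (∀ e ∈ H, ∀ E : Set (∀ j, V j), MeasurableSet[Be e] E →
          energy E (⨆ f ∈ skel e, B' f) < energy E (⨆ f ∈ skel e, B f) + ε ^ 2 ∧
          disc V e E (⨆ f ∈ skel e, B' f) ≤ δ)) ∨
      -- (Structure)
      (∃ B' : Finset J → MeasurableSpace (∀ j, V j),
        (∀ f ∈ hbd H, B f ≤ B' f ∧ B' f ≤ cylAlg V f ∧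
          (complexity (B' f) : ℝ) ≤ M + C) ∧
        (∃ e ∈ H, ∃ E : Set (∀ j, V j), MeasurableSet[Be e] E ∧
          energy E (⨆ f ∈ skel e, B f) + ε ^ 2 ≤ energy E (⨆ f ∈ skel e, B' f))) := by

  classical
  intro n hn m ε δ hm hε hδ
  set Pb : ℕ := 2 ^ n * 2 ^ (2 ^ Nat.floor m) with hPb
  set K : ℕ := Nat.ceil ((Pb : ℝ) / δ ^ 2) + 1 with hK
  refine ⟨(K : ℝ), by exact_mod_cast Nat.succ_pos _, ?_⟩
  intro J _ hJcard V _ _ d hd H hHd Be hBe M hM B hB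
  haveI : Nonempty (∀ j, V j) := ⟨fun j => Classical.arbitrary _⟩
  set measF : Finset J → Finset (Set (∀ j, V j)) :=
    fun e => Finset.univ.filter (fun E => MeasurableSet[Be e] E) with hmeasF
  set Φ : (Finset J → MeasurableSpace (∀ j, V j)) → ℝ :=
    fun Bc => ∑ e ∈ H, ∑ E ∈ measF e, energy E (⨆ f ∈ skel e, Bc f) with hΦ
  have hcard_measF : ∀ e ∈ H, (measF e).card ≤ 2 ^ (2 ^ Nat.floor m) := by
    intro e he
    obtain ⟨S, hScard, hSgen⟩ := exists_gen (Be e)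
    have h1 : (measF e).card ≤ 2 ^ (2 ^ S.card) := card_meas_le _ S hSgen
    have h2 : S.card ≤ Nat.floor m := by
      rw [hScard]; exact Nat.le_floor (hBe e he).2
    exact h1.trans (Nat.pow_le_pow_right (by norm_num) (Nat.pow_le_pow_right (by norm_num) h2))
  have hΦ_le : ∀ Bc, Φ Bc ≤ (Pb : ℝ) := by
    intro Bc
    rw [hΦ]
    calc (∑ e ∈ H, ∑ E ∈ measF e, energy E (⨆ f ∈ skel e, Bc f))
        ≤ ∑ _e ∈ H, ((2:ℝ) ^ (2 ^ Nat.floor m)) := by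
          apply Finset.sum_le_sum
          intro e he
          calc ∑ E ∈ measF e, energy E (⨆ f ∈ skel e, Bc f)
              ≤ ∑ _E ∈ measF e, (1:ℝ) := Finset.sum_le_sum (fun E _ => energy_le_one E _)
            _ = ((measF e).card : ℝ) := by simp
            _ ≤ _ := by
                have := hcard_measF e he
                calc ((measF e).card : ℝ) ≤ ((2 ^ (2 ^ Nat.floor m) : ℕ) : ℝ) := by exact_mod_cast this
                  _ = (2:ℝ) ^ (2 ^ Nat.floor m) := by push_cast; ring
      _ = (H.card : ℝ) * (2:ℝ) ^ (2 ^ Nat.floor m) := by rw [Finset.sum_const, nsmul_eq_mul]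
      _ ≤ (2:ℝ) ^ n * (2:ℝ) ^ (2 ^ Nat.floor m) := by
          have hH2 : H.card ≤ 2 ^ n := by
            calc H.card ≤ Fintype.card (Finset J) := Finset.card_le_univ H
              _ = 2 ^ Fintype.card J := Fintype.card_finset
              _ ≤ 2 ^ n := Nat.pow_le_pow_right (by norm_num) hJcard
          apply mul_le_mul_of_nonneg_right ?_ (by positivity)
          calc (H.card : ℝ) ≤ ((2 ^ n : ℕ) : ℝ) := by exact_mod_cast hH2
            _ = (2:ℝ) ^ n := by push_cast; ring
      _ = (Pb : ℝ) := by rw [hPb]; push_cast; ring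
  have hΦ_nonneg : ∀ Bc, 0 ≤ Φ Bc := fun Bc =>
    Finset.sum_nonneg (fun e _ => Finset.sum_nonneg (fun E _ => energy_nonneg _ _))
  have claim : ∀ k : ℕ, k ≤ K →
      ((∃ B' : Finset J → MeasurableSpace (∀ j, V j),
        (∀ f ∈ hbd H, B f ≤ B' f ∧ B' f ≤ cylAlg V f) ∧
        (∀ e ∈ H, ∀ E : Set (∀ j, V j), MeasurableSet[Be e] E →
          energy E (⨆ f ∈ skel e, B' f) < energy E (⨆ f ∈ skel e, B f) + ε ^ 2 ∧
          disc V e E (⨆ f ∈ skel e, B' f) ≤ δ)) ∨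
      (∃ B' : Finset J → MeasurableSpace (∀ j, V j),
        (∀ f ∈ hbd H, B f ≤ B' f ∧ B' f ≤ cylAlg V f ∧
          (complexity (B' f) : ℝ) ≤ M + (K : ℝ)) ∧
        (∃ e ∈ H, ∃ E : Set (∀ j, V j), MeasurableSet[Be e] E ∧
          energy E (⨆ f ∈ skel e, B f) + ε ^ 2 ≤ energy E (⨆ f ∈ skel e, B' f)))) ∨
      ∃ B' : Finset J → MeasurableSpace (∀ j, V j),
        (∀ f ∈ hbd H, B f ≤ B' f ∧ B' f ≤ cylAlg V f ∧
          ∃ S : Finset (Set (∀ j, V j)),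
            MeasurableSpace.generateFrom (↑S : Set (Set (∀ j, V j))) = B' f ∧
            (S.card : ℝ) ≤ M + (k : ℝ)) ∧
        (∀ e ∈ H, ∀ E : Set (∀ j, V j), MeasurableSet[Be e] E →
          energy E (⨆ f ∈ skel e, B' f) < energy E (⨆ f ∈ skel e, B f) + ε ^ 2) ∧
        Φ B + (k : ℝ) * δ ^ 2 ≤ Φ B' := by
    intro k
    induction k with
    | zero =>
        intro _
        right
        refine ⟨B, ?_, ?_, ?_⟩
        · intro f hf
          refine ⟨le_refl _, (hB f hf).1, ?_⟩
          obtain ⟨S, hScard, hSgen⟩ := exists_gen (B f)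
          refine ⟨S, hSgen, ?_⟩
          rw [hScard]
          push_cast
          linarith [(hB f hf).2]
        · intro e he E hE
          have : (0:ℝ) < ε ^ 2 := by positivity
          linarith
        · push_cast; simp
    | succ k ih =>
        intro hk1
        rcases ih (Nat.le_of_succ_le hk1) with hgoal | ⟨B', hInv1, hInv2, hInv3⟩
        · exact Or.inl hgoal
        by_cases hdisc : ∃ e ∈ H, ∃ E, MeasurableSet[Be e] E ∧
            δ < disc V e E (⨆ f ∈ skel e, B' f)
        · obtain ⟨e, he, E, hE, hd⟩ := hdisc
          set m₀ := ⨆ f ∈ skel e, B' f with hm₀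
          have hwit : ∃ Ef : Finset J → Set (∀ j, V j),
              (∀ f ∈ skel e, MeasurableSet[cylAlg V f] (Ef f)) ∧
              δ < |avg (fun x => (ind E x - cexp m₀ (ind E) x) * ∏ f ∈ skel e, ind (Ef f) x)| := by
            by_contra hno
            push_neg at hno
            have hle : disc V e E m₀ ≤ δ := by
              apply Real.sSup_le _ hδ.le
              rintro r ⟨Ef, hEf, rfl⟩
              exact hno Ef hEf
            exact absurd hd (not_lt.mpr hle)
          obtain ⟨Ef, hEf, hrδ⟩ := hwit
          set B'' := fun f =>
            if f ∈ skel e then B' f ⊔ MeasurableSpace.generateFrom {Ef f} else B' f with hB''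
          have hmono : ∀ f, B' f ≤ B'' f := by
            intro f
            rw [hB'']
            dsimp only
            split
            · exact le_sup_left
            · exact le_refl _
          have hEfmem : ∀ f ∈ skel e, MeasurableSet[B'' f] (Ef f) := by
            intro f hf
            rw [hB'']
            show MeasurableSet[(if f ∈ skel e then B' f ⊔ MeasurableSpace.generateFrom {Ef f} else B' f)] (Ef f)
            rw [if_pos hf]
            have hgle : MeasurableSpace.generateFrom {Ef f} ≤
                B' f ⊔ MeasurableSpace.generateFrom {Ef f} := le_sup_right
            exact hgle _ (MeasurableSpace.measurableSet_generateFrom rfl)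
          set m₁ := ⨆ f ∈ skel e, B'' f with hm₁
          have hm01 : m₀ ≤ m₁ := iSup₂_mono (fun f _ => hmono f)
          have hle_m₁ : ∀ f ∈ skel e, B'' f ≤ m₁ := fun f hf => le_biSup _ hf
          have hAC : AtomConst m₁ (fun x => ∏ f ∈ skel e, ind (Ef f) x) := by
            intro x y hy
            apply Finset.prod_congr rfl
            intro f hf
            exact atomConst_ind (hle_m₁ f hf _ (hEfmem f hf)) x y hy
          have hbd1 : ∀ x, |(fun x => ∏ f ∈ skel e, ind (Ef f) x) x| ≤ 1 := by
            intro x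
            dsimp only
            rw [abs_le]
            constructor
            · have h0 : (0:ℝ) ≤ ∏ f ∈ skel e, ind (Ef f) x :=
                Finset.prod_nonneg (fun f _ => by unfold ind; positivity)
              linarith
            · apply Finset.prod_le_one (fun f _ => by unfold ind; positivity)
                (fun f _ => by unfold ind; split <;> norm_num)
          have hinc : energy E m₀ + δ ^ 2 ≤ energy E m₁ :=
            energy_increment hm01 hAC hbd1 hδ.le hrδ.le
          have hEm : E ∈ measF e := by rw [hmeasF]; simp [hE]
          have hpairmono : ∀ e' ∈ H, ∀ E' : Set (∀ j, V j),
              energy E' (⨆ f ∈ skel e', B' f) ≤ energy E' (⨆ f ∈ skel e', B'' f) :=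
            fun e' _ E' => energy_mono (iSup₂_mono (fun f _ => hmono f)) E'
          have hΦstep : Φ B' + δ ^ 2 ≤ Φ B'' := by
            rw [hΦ]
            dsimp only
            rw [← Finset.add_sum_erase H _ he, ← Finset.add_sum_erase H _ he]
            have hinner : (∑ E' ∈ measF e, energy E' (⨆ f ∈ skel e, B' f)) + δ ^ 2 ≤
                ∑ E' ∈ measF e, energy E' (⨆ f ∈ skel e, B'' f) := by
              rw [← Finset.add_sum_erase _ _ hEm, ← Finset.add_sum_erase _ _ hEm]
              have hrest := Finset.sum_le_sum
                (fun E' (_ : E' ∈ (measF e).erase E) => hpairmono e he E')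
              rw [← hm₀, ← hm₁]
              linarith [hinc, hrest]
            have houter := Finset.sum_le_sum (fun e' (he' : e' ∈ H.erase e) =>
              Finset.sum_le_sum (fun E' (_ : E' ∈ measF e') =>
                hpairmono e' (Finset.mem_of_mem_erase he') E'))
            linarith [hinner, houter]
          have hB''props : ∀ f ∈ hbd H, B f ≤ B'' f ∧ B'' f ≤ cylAlg V f ∧
              ∃ S : Finset (Set (∀ j, V j)),
                MeasurableSpace.generateFrom (↑S : Set (Set (∀ j, V j))) = B'' f ∧
                (S.card : ℝ) ≤ M + ((k + 1 : ℕ) : ℝ) := by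
            intro f hf
            obtain ⟨hBB', hcyl, S, hSgen, hScard⟩ := hInv1 f hf
            by_cases hfe : f ∈ skel e
            · have hB''f : B'' f = B' f ⊔ MeasurableSpace.generateFrom {Ef f} := by
                rw [hB'']; dsimp only; rw [if_pos hfe]
              refine ⟨hBB'.trans (hmono f), ?_, ⟨S ∪ {Ef f}, ?_, ?_⟩⟩
              · rw [hB''f]
                apply sup_le hcyl
                apply MeasurableSpace.generateFrom_le
                intro s hs
                rw [Set.mem_singleton_iff] at hs
                subst hs
                exact hEf f hfe
              · rw [Finset.coe_union, Finset.coe_singleton,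
                  ← MeasurableSpace.generateFrom_sup_generateFrom, hSgen, hB''f]
              · have hcu : (S ∪ {Ef f}).card ≤ S.card + 1 :=
                  (Finset.card_union_le S {Ef f}).trans (by simp)
                have hcu' : ((S ∪ {Ef f}).card : ℝ) ≤ (S.card : ℝ) + 1 := by exact_mod_cast hcu
                push_cast
                push_cast at hScard
                linarith
            · have hB''f : B'' f = B' f := by
                rw [hB'']; dsimp only; rw [if_neg hfe]
              rw [hB''f]
              refine ⟨hBB', hcyl, S, hSgen, ?_⟩
              push_cast
              push_cast at hScard
              linarith
          by_cases hstr : ∃ e' ∈ H, ∃ E' : Set (∀ j, V j), MeasurableSet[Be e'] E' ∧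
              energy E' (⨆ f ∈ skel e', B f) + ε ^ 2 ≤ energy E' (⨆ f ∈ skel e', B'' f)
          · left; right
            refine ⟨B'', ?_, hstr⟩
            intro f hf
            obtain ⟨h1, h2, S, hSgen, hScard⟩ := hB''props f hf
            refine ⟨h1, h2, ?_⟩
            have hc : (complexity (B'' f) : ℝ) ≤ (S.card : ℝ) := by
              exact_mod_cast complexity_le_card hSgen
            have hkK : ((k + 1 : ℕ) : ℝ) ≤ (K : ℝ) := by exact_mod_cast hk1
            linarith
          · push_neg at hstr
            right
            refine ⟨B'', hB''props, ?_, ?_⟩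
            · intro e' he' E' hE'
              exact hstr e' he' E' hE'
            · have hcast : ((k + 1 : ℕ) : ℝ) = (k : ℝ) + 1 := by push_cast; ring
              rw [hcast]
              calc Φ B + ((k : ℝ) + 1) * δ ^ 2 = (Φ B + (k : ℝ) * δ ^ 2) + δ ^ 2 := by ring
                _ ≤ Φ B' + δ ^ 2 := by linarith [hInv3]
                _ ≤ Φ B'' := hΦstep
        · push_neg at hdisc
          left; left
          refine ⟨B', fun f hf => ⟨(hInv1 f hf).1, (hInv1 f hf).2.1⟩, ?_⟩
          intro e he E hE
          exact ⟨hInv2 e he E hE, hdisc e he E hE⟩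
  rcases claim K (le_refl K) with hgoal | ⟨B', _, _, hΦK⟩
  · exact hgoal
  · exfalso
    have h1 : Φ B' ≤ (Pb : ℝ) := hΦ_le B'
    have h2 : (Pb : ℝ) < (K : ℝ) * δ ^ 2 := by
      have hceil : (Pb : ℝ) / δ ^ 2 < (K : ℝ) := by
        rw [hK]
        push_cast
        have := Nat.le_ceil ((Pb : ℝ) / δ ^ 2)
        linarith
      calc (Pb : ℝ) = ((Pb : ℝ) / δ ^ 2) * δ ^ 2 := by field_simp
        _ < (K : ℝ) * δ ^ 2 := mul_lt_mul_of_pos_right hceil (by positivity)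
    have h3 := hΦ_nonneg B
    linarith
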